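/- If a graph G has a perfect matching M, and there exist vertex-disjoint subgraphs D and R partitioning V(G) such that M restricts to perfect matchings of D and of R, R is König-Egerváry, α(D) = ν(D) - 1, and α(G) = ν(G) - 1, then there exists an edge xy of M inside D such that G - {x,y} is König-Egerváry. -/

import Mathlib

open SimpleGraph

variable {V : Type*}

/-- A graph has a perfect matching. -/
def HasPM (G : SimpleGraph V) : Prop := ∃ M : G.Subgraph, M.IsPerfectMatching

/-- A set of vertices is independent (pairwise nonadjacent). -/
def IsIndep (G : SimpleGraph V) (s : Set V) : Prop := ∀ x ∈ s, ∀ y ∈ s, ¬ G.Adj x y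

/-- The independence number. -/
noncomputable def alphaNum (G : SimpleGraph V) : ℕ :=
  sSup {n | ∃ s : Set V, IsIndep G s ∧ s.ncard = n}

/-- The matching number. -/
noncomputable def matchNum (G : SimpleGraph V) : ℕ :=
  sSup {n | ∃ M : G.Subgraph, M.IsMatching ∧ M.edgeSet.ncard = n}

/-- A graph is König-Egerváry if α + ν = n. -/
def IsKE (G : SimpleGraph V) : Prop := alphaNum G + matchNum G = Nat.card V

/-- `G` is (the whole graph) an even subdivision of `K₄`: four corner vertices and six
internally disjoint odd paths joining each pair of corners, comprising all vertices
and edges of `G`. -/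
def IsEvenSubdivK4 (G : SimpleGraph V) : Prop :=
  ∃ (c : Fin 4 → V) (P : ∀ i j : Fin 4, G.Walk (c i) (c j)),
    Function.Injective c ∧
    (∀ i j : Fin 4, P j i = (P i j).reverse) ∧
    (∀ i j : Fin 4, i ≠ j → (P i j).IsPath ∧ Odd (P i j).length) ∧
    (∀ i j k l : Fin 4, i ≠ j → k ≠ l → ¬(i = k ∧ j = l) → ¬(i = l ∧ j = k) →
      ∀ x : V, x ∈ (P i j).support → x ∈ (P k l).support → x ∈ Set.range c) ∧
    (∀ x : V, ∃ i j : Fin 4, i ≠ j ∧ x ∈ (P i j).support) ∧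
    (∀ e : Sym2 V, e ∈ G.edgeSet ↔ ∃ i j : Fin 4, i ≠ j ∧ e ∈ (P i j).edges)

/-- `G` is (the whole graph) an even subdivision of `T`: two vertex-disjoint odd cycles
joined at blossom tips `v`, `w` by an odd path internally disjoint from the cycles,
comprising all vertices and edges of `G`. -/
def IsEvenSubdivT (G : SimpleGraph V) : Prop :=
  ∃ (v w : V) (C1 : G.Walk v v) (C2 : G.Walk w w) (P : G.Walk v w),
    C1.IsCycle ∧ C2.IsCycle ∧ Odd C1.length ∧ Odd C2.length ∧
    P.IsPath ∧ Odd P.length ∧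
    (∀ x : V, x ∈ C1.support → x ∉ C2.support) ∧
    (∀ x : V, x ∈ P.support → x ∈ C1.support → x = v) ∧
    (∀ x : V, x ∈ P.support → x ∈ C2.support → x = w) ∧
    (∀ x : V, x ∈ C1.support ∨ x ∈ C2.support ∨ x ∈ P.support) ∧
    (∀ e : Sym2 V, e ∈ G.edgeSet ↔ e ∈ C1.edges ∨ e ∈ C2.edges ∨ e ∈ P.edges)

/-- `G` contains a nice even subdivision of `T`: a subgraph `H` which is an even
subdivision of `T` and such that `G - V(H)` has a perfect matching. -/
def HasNiceEvenSubdivT (G : SimpleGraph V) : Prop :=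
  ∃ H : G.Subgraph, IsEvenSubdivT H.coe ∧ HasPM (G.induce (H.vertsᶜ))

/-- `G` has a spanning subgraph whose components are independent edges together with a
positive number of vertex-disjoint odd cycles. -/
def HasOddCycleCover (G : SimpleGraph V) : Prop :=
  ∃ (M : G.Subgraph) (k : ℕ) (u : Fin k → V) (C : ∀ i : Fin k, G.Walk (u i) (u i)),
    0 < k ∧ M.IsMatching ∧
    (∀ i, (C i).IsCycle ∧ Odd (C i).length) ∧
    (∀ i j, i ≠ j → ∀ x : V, x ∈ (C i).support → x ∉ (C j).support) ∧
    (∀ i, ∀ x ∈ (C i).support, x ∉ M.verts) ∧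
    (∀ x : V, x ∈ M.verts ∨ ∃ i, x ∈ (C i).support)

/-- A matchable graph is Egerváry iff it has no such spanning cover. -/
def IsEgervary (G : SimpleGraph V) : Prop := ¬ HasOddCycleCover G

/-- `G` contains two vertex-disjoint odd cycles. -/
def TwoDisjointOddCycles (G : SimpleGraph V) : Prop :=
  ∃ (a b : V) (C1 : G.Walk a a) (C2 : G.Walk b b),
    C1.IsCycle ∧ C2.IsCycle ∧ Odd C1.length ∧ Odd C2.length ∧
    ∀ x : V, x ∈ C1.support → x ∉ C2.support

/-- `G` is α-critical: deleting any edge increases the independence number. -/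
def AlphaCritical (G : SimpleGraph V) : Prop :=
  ∀ e ∈ G.edgeSet, alphaNum (G.deleteEdges {e}) = alphaNum G + 1

/-- The (open) neighborhood of a set of vertices. -/
def setN (G : SimpleGraph V) (I : Set V) : Set V := {x | x ∉ I ∧ ∃ y ∈ I, G.Adj x y}

section Aux

/-- In a matching, a vertex lies in at most one edge. -/
lemma matching_edge_unique' {W : Type*} {H : SimpleGraph W} {M : H.Subgraph}
    (hm : M.IsMatching) {v : W} {e e' : Sym2 W}
    (he : e ∈ M.edgeSet) (he' : e' ∈ M.edgeSet) (hv : v ∈ e) (hv' : v ∈ e') : e = e' := by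
  obtain ⟨w, rfl⟩ := Sym2.mem_iff_exists.mp hv
  obtain ⟨w', rfl⟩ := Sym2.mem_iff_exists.mp hv'
  rw [SimpleGraph.Subgraph.mem_edgeSet] at he he'
  obtain ⟨u, _, huniq⟩ := hm (M.edge_vert he)
  rw [huniq w he, huniq w' he']

/-- Vertex count of a matching is twice its edge count. -/
lemma matching_ncard_verts {W : Type*} {H : SimpleGraph W} {M : H.Subgraph}
    (hm : M.IsMatching) : M.verts.ncard = 2 * M.edgeSet.ncard := by
  classical
  have hout : ∀ e : Sym2 W, e = s((Quot.out e).1, (Quot.out e).2) := by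
    intro e; rw [Sym2.mk, Quot.out_eq]
  have hadj : ∀ e ∈ M.edgeSet, M.Adj (Quot.out e).1 (Quot.out e).2 := by
    intro e he
    rw [hout e, SimpleGraph.Subgraph.mem_edgeSet] at he
    exact he
  have hne : ∀ e ∈ M.edgeSet, (Quot.out e).1 ≠ (Quot.out e).2 :=
    fun e he => (M.adj_sub (hadj e he)).ne
  let f : M.edgeSet × Bool → M.verts := fun p =>
    if p.2 then ⟨(Quot.out (p.1 : Sym2 W)).1, M.edge_vert (hadj _ p.1.2)⟩
    else ⟨(Quot.out (p.1 : Sym2 W)).2, M.edge_vert (hadj _ p.1.2).symm⟩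
  have hfval : ∀ p : M.edgeSet × Bool, (f p : W) ∈ (p.1 : Sym2 W) := by
    rintro ⟨e, b⟩
    by_cases hb : b <;> simp [f, hb, Sym2.out_fst_mem, Sym2.out_snd_mem]
  have hbij : Function.Bijective f := by
    constructor
    · rintro ⟨e, b⟩ ⟨e', b'⟩ hfe
      have hval : (f (e, b) : W) = (f (e', b') : W) := congrArg _ hfe
      have hee' : e = e' := by
        refine Subtype.ext (matching_edge_unique' hm e.2 e'.2 (hfval (e, b)) ?_)
        rw [hval]; exact hfval (e', b')
      subst hee'
      refine Prod.ext rfl ?_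
      by_contra hbb
      have hb : (Quot.out (e : Sym2 W)).1 = (Quot.out (e : Sym2 W)).2 := by
        rcases Bool.eq_false_or_eq_true b with hb | hb <;>
          rcases Bool.eq_false_or_eq_true b' with hb' | hb' <;>
          subst hb <;> subst hb' <;> clear hout <;> simp_all [f]
      exact hne e e.2 hb
    · rintro ⟨v, hv⟩
      obtain ⟨w, hw, -⟩ := hm hv
      have hes : s(v, w) ∈ M.edgeSet := hw
      have hev : v ∈ (s(v, w) : Sym2 W) := Sym2.mem_mk_left v w
      rw [hout (s(v, w))] at hev
      rcases Sym2.mem_iff.mp hev with h1 | h2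
      · refine ⟨(⟨s(v, w), hes⟩, true), ?_⟩
        simp only [f, if_true]
        exact Subtype.ext h1.symm
      · refine ⟨(⟨s(v, w), hes⟩, false), ?_⟩
        simp only [f, Bool.false_eq_true, if_false]
        exact Subtype.ext h2.symm
  have hcard := Nat.card_eq_of_bijective f hbij
  rw [Nat.card_prod, Nat.card_eq_fintype_card (α := Bool), Fintype.card_bool,
    Nat.card_coe_set_eq, Nat.card_coe_set_eq] at hcard
  omega

/-- Any matching in a finite graph has at most `|W|/2`-many edges, in product form. -/
lemma matching_ncard_le {W : Type*} [Fintype W] {H : SimpleGraph W} {M : H.Subgraph}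
    (hm : M.IsMatching) : 2 * M.edgeSet.ncard ≤ Nat.card W := by
  rw [← matching_ncard_verts hm]
  calc M.verts.ncard ≤ (Set.univ : Set W).ncard :=
        Set.ncard_le_ncard (Set.subset_univ _) Set.finite_univ
    _ = Nat.card W := Set.ncard_univ W

lemma pm_ncard_verts {W : Type*} [Fintype W] {H : SimpleGraph W} {M : H.Subgraph}
    (hpm : M.IsPerfectMatching) : 2 * M.edgeSet.ncard = Nat.card W := by
  have h1 := matching_ncard_verts hpm.1
  have h2 : M.verts = Set.univ := hpm.2.verts_eq_univ
  rw [h2, Set.ncard_univ] at h1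
  omega

lemma matchNum_eq_of_pm {W : Type*} [Fintype W] {H : SimpleGraph W} {M : H.Subgraph}
    (hpm : M.IsPerfectMatching) : matchNum H = M.edgeSet.ncard := by
  unfold matchNum
  have hb : ∀ n ∈ {n | ∃ N : H.Subgraph, N.IsMatching ∧ N.edgeSet.ncard = n},
      n ≤ M.edgeSet.ncard := by
    rintro n ⟨N, hN, rfl⟩
    have h1 := matching_ncard_le hN
    have h2 := pm_ncard_verts hpm
    omega
  exact le_antisymm (csSup_le ⟨_, M, hpm.1, rfl⟩ hb) (le_csSup ⟨_, hb⟩ ⟨M, hpm.1, rfl⟩)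

lemma indep_ncard_le_alphaNum {W : Type*} [Fintype W] {H : SimpleGraph W} {s : Set W}
    (hs : IsIndep H s) : s.ncard ≤ alphaNum H := by
  unfold alphaNum
  refine le_csSup ⟨Nat.card W, ?_⟩ ⟨s, hs, rfl⟩
  rintro n ⟨t, _, rfl⟩
  calc t.ncard ≤ (Set.univ : Set W).ncard :=
        Set.ncard_le_ncard (Set.subset_univ _) Set.finite_univ
    _ = Nat.card W := Set.ncard_univ W

lemma exists_indep_alphaNum {W : Type*} [Fintype W] (H : SimpleGraph W) :
    ∃ s : Set W, IsIndep H s ∧ s.ncard = alphaNum H := by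
  have hmem : alphaNum H ∈ {n | ∃ s : Set W, IsIndep H s ∧ s.ncard = n} := by
    unfold alphaNum
    refine Nat.sSup_mem ⟨0, ∅, fun x hx => absurd hx (Set.notMem_empty x), Set.ncard_empty W⟩
      ⟨Nat.card W, ?_⟩
    rintro n ⟨t, _, rfl⟩
    calc t.ncard ≤ (Set.univ : Set W).ncard :=
          Set.ncard_le_ncard (Set.subset_univ _) Set.finite_univ
      _ = Nat.card W := Set.ncard_univ W
  obtain ⟨s, hs, hcard⟩ := hmem
  exact ⟨s, hs, hcard⟩

/-- Independent sets have at most as many vertices as a perfect matching has edges. -/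
lemma indep_le_pm_edges {W : Type*} [Fintype W] {H : SimpleGraph W} {M : H.Subgraph}
    (hpm : M.IsPerfectMatching) {s : Set W} (hs : IsIndep H s) :
    s.ncard ≤ M.edgeSet.ncard := by
  classical
  let f : W → Sym2 W := fun v => (hpm.1.toEdge ⟨v, hpm.2 v⟩ : Sym2 W)
  have hmemf : ∀ v : W, v ∈ f v := fun v => Sym2.mem_mk_left _ _
  have hfE : ∀ v : W, f v ∈ M.edgeSet := fun v => (hpm.1.toEdge ⟨v, hpm.2 v⟩).2
  refine Set.ncard_le_ncard_of_injOn f (fun v _ => hfE v) ?_ (Set.toFinite _)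
  intro v hv w hw hvw
  have h1 : v ∈ f w := hvw ▸ hmemf v
  have hfw : f w = s(w, (hpm.1 (hpm.2 w)).choose) := rfl
  rw [hfw, Sym2.mem_iff] at h1
  rcases h1 with rfl | h2
  · rfl
  · exact absurd (M.adj_sub (h2 ▸ (hpm.1 (hpm.2 w)).choose_spec.1)) (hs w hw v hv)

lemma alphaNum_le_pm_edges {W : Type*} [Fintype W] {H : SimpleGraph W} {M : H.Subgraph}
    (hpm : M.IsPerfectMatching) : alphaNum H ≤ M.edgeSet.ncard := by
  unfold alphaNum
  refine csSup_le ⟨0, ∅, fun x hx => absurd hx (Set.notMem_empty x), Set.ncard_empty W⟩ ?_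
  rintro n ⟨t, ht, rfl⟩
  exact indep_le_pm_edges hpm ht

/-- Restriction of a perfect matching to a closed vertex set, as a subgraph of the
induced graph. -/
def restrictSub {V : Type*} (G : SimpleGraph V) (M : G.Subgraph) (C : Set V)
    (hC : ∀ ⦃v w : V⦄, M.Adj v w → v ∈ C → w ∈ C) : (G.induce C).Subgraph where
  verts := Set.univ
  Adj a b := M.Adj ↑a ↑b
  adj_sub h := M.adj_sub h
  edge_vert _ := Set.mem_univ _
  symm := ⟨fun a b h => M.adj_symm h⟩

lemma restrictSub_isPM {V : Type*} {G : SimpleGraph V} {M : G.Subgraph}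
    (hM : M.IsPerfectMatching) {C : Set V}
    (hC : ∀ ⦃v w : V⦄, M.Adj v w → v ∈ C → w ∈ C) :
    (restrictSub G M C hC).IsPerfectMatching := by
  constructor
  · rintro ⟨v, hv⟩ -
    obtain ⟨w, hw, hu⟩ := hM.1 (hM.2 v)
    exact ⟨⟨w, hC hw hv⟩, hw, fun ⟨w', hw'⟩ h => Subtype.ext (hu w' h)⟩
  · intro v
    exact Set.mem_univ v

end Aux
/-- If `G` has perfect matching `M` splitting into perfect matchings of complementary
induced subgraphs `D = G[A]` (with `α(D) = ν(D) - 1`) and KE `R = G[B]`, and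
`α(G) = ν(G) - 1`, then some `M`-edge `xy` inside `D` has `G - {x,y}` König-Egerváry. -/
theorem exists_matching_edge_KE_deletion {V : Type*} [Fintype V] (G : SimpleGraph V)
    (M : G.Subgraph) (hM : M.IsPerfectMatching)
    (A B : Set V) (hdisj : Disjoint A B) (hunion : A ∪ B = Set.univ)
    (hsplit : ∀ x y : V, M.Adj x y → (x ∈ A ∧ y ∈ A) ∨ (x ∈ B ∧ y ∈ B))
    (hRKE : IsKE (G.induce B))
    (hD : alphaNum (G.induce A) + 1 = matchNum (G.induce A))
    (hG : alphaNum G + 1 = matchNum G) :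
    ∃ x y : V, x ∈ A ∧ y ∈ A ∧ M.Adj x y ∧ IsKE (G.induce ({x, y}ᶜ : Set V)) := by
  classical
  have hMA : ∀ ⦃v w : V⦄, M.Adj v w → v ∈ A → w ∈ A := by
    intro v w h hv
    rcases hsplit v w h with ⟨_, hw⟩ | ⟨hvB, _⟩
    · exact hw
    · exact absurd hvB (Set.disjoint_left.mp hdisj hv)
  have hkn : 2 * M.edgeSet.ncard = Nat.card V := pm_ncard_verts hM
  have hνG : matchNum G = M.edgeSet.ncard := matchNum_eq_of_pm hM
  obtain ⟨I, hI, hIcard⟩ := exists_indep_alphaNum G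
  have hak : I.ncard + 1 = M.edgeSet.ncard := by rw [hIcard, hG, hνG]
  -- the restricted perfect matching on A
  have hMApm : (restrictSub G M A hMA).IsPerfectMatching := restrictSub_isPM hM hMA
  have hνA : matchNum (G.induce A) = (restrictSub G M A hMA).edgeSet.ncard :=
    matchNum_eq_of_pm hMApm
  -- Claim: some matching edge inside A avoids I
  have hclaim : ∃ x y : V, x ∈ A ∧ y ∈ A ∧ M.Adj x y ∧ x ∉ I ∧ y ∉ I := by
    by_contra hbad
    push_neg at hbad
    have hkA : alphaNum (G.induce A) + 1 = (restrictSub G M A hMA).edgeSet.ncard := by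
      rw [hD, hνA]
    have hex : ∀ e ∈ (restrictSub G M A hMA).edgeSet, ∃ u : ↥A, (u : V) ∈ I ∧ u ∈ e := by
      intro e he
      induction e using Sym2.ind with
      | _ u v =>
        rw [SimpleGraph.Subgraph.mem_edgeSet] at he
        by_cases hu : (u : V) ∈ I
        · exact ⟨u, hu, Sym2.mem_mk_left u v⟩
        · exact ⟨v, hbad ↑u ↑v u.2 v.2 he hu, Sym2.mem_mk_right u v⟩
    obtain ⟨e0, he0⟩ : (restrictSub G M A hMA).edgeSet.Nonempty :=
      Set.nonempty_of_ncard_ne_zero (by omega)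
    obtain ⟨a0, -, -⟩ := hex e0 he0
    haveI : Nonempty ↥A := ⟨a0⟩
    let f : Sym2 ↥A → ↥A := fun e =>
      if h : ∃ u : ↥A, (u : V) ∈ I ∧ u ∈ e then h.choose else Classical.arbitrary _
    have hineq : (restrictSub G M A hMA).edgeSet.ncard ≤ (Subtype.val ⁻¹' I : Set ↥A).ncard := by
      refine Set.ncard_le_ncard_of_injOn f ?_ ?_ (Set.toFinite _)
      · intro e he
        have h := hex e he
        show f e ∈ Subtype.val ⁻¹' I
        simp only [f, dif_pos h]
        exact h.choose_spec.1
      · intro e he e' he' hff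
        have h := hex e he
        have h' := hex e' he'
        have h1 : f e = h.choose := dif_pos h
        have h2 : f e' = h'.choose := dif_pos h'
        have hv1 : f e ∈ e := by rw [h1]; exact h.choose_spec.2
        have hv2 : f e ∈ e' := by rw [hff, h2]; exact h'.choose_spec.2
        exact matching_edge_unique' hMApm.1 he he' hv1 hv2
    have hindep : IsIndep (G.induce A) (Subtype.val ⁻¹' I) :=
      fun u hu v hv hadj => hI ↑u hu ↑v hv hadj
    have hle := indep_ncard_le_alphaNum hindep
    omega
  obtain ⟨x, y, hxA, hyA, hxy, hxI, hyI⟩ := hclaim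
  have hne : x ≠ y := (M.adj_sub hxy).ne
  refine ⟨x, y, hxA, hyA, hxy, ?_⟩
  have hCcl : ∀ ⦃v w : V⦄, M.Adj v w → v ∈ ({x, y}ᶜ : Set V) → w ∈ ({x, y}ᶜ : Set V) := by
    intro v w h hv hw
    simp only [Set.mem_insert_iff, Set.mem_singleton_iff] at hw
    rcases hw with rfl | rfl
    · obtain ⟨z, hz, hu⟩ := hM.1 (hM.2 w)
      have h1 : v = z := hu v h.symm
      have h2 : y = z := hu y hxy
      exact hv (by rw [h1, ← h2]; exact Set.mem_insert_of_mem _ rfl)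
    · obtain ⟨z, hz, hu⟩ := hM.1 (hM.2 w)
      have h1 : v = z := hu v h.symm
      have h2 : x = z := hu x hxy.symm
      exact hv (by rw [h1, ← h2]; exact Set.mem_insert _ _)
  have hMCpm : (restrictSub G M _ hCcl).IsPerfectMatching := restrictSub_isPM hM hCcl
  have hνC : matchNum (G.induce ({x, y}ᶜ : Set V)) = (restrictSub G M _ hCcl).edgeSet.ncard :=
    matchNum_eq_of_pm hMCpm
  have hkC : 2 * (restrictSub G M _ hCcl).edgeSet.ncard = Nat.card ↥({x, y}ᶜ : Set V) :=
    pm_ncard_verts hMCpm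
  have hcardC : Nat.card ↥({x, y}ᶜ : Set V) + 2 = Nat.card V := by
    rw [Nat.card_coe_set_eq]
    have h := Set.ncard_add_ncard_compl ({x, y} : Set V) (Set.toFinite _) (Set.toFinite _)
    rw [Set.ncard_pair hne] at h
    omega
  have hIsub : I ⊆ ({x, y}ᶜ : Set V) := by
    intro z hz hzm
    simp only [Set.mem_insert_iff, Set.mem_singleton_iff] at hzm
    rcases hzm with rfl | rfl
    · exact hxI hz
    · exact hyI hz
  have hICindep : IsIndep (G.induce ({x, y}ᶜ : Set V)) (Subtype.val ⁻¹' I) :=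
    fun u hu v hv hadj => hI ↑u hu ↑v hv hadj
  have hICcard : (Subtype.val ⁻¹' I : Set ↥({x, y}ᶜ : Set V)).ncard = I.ncard := by
    rw [← Set.ncard_image_of_injective _ Subtype.val_injective, Subtype.image_preimage_coe,
      Set.inter_eq_self_of_subset_right hIsub]
  have hge : I.ncard ≤ alphaNum (G.induce ({x, y}ᶜ : Set V)) :=
    hICcard ▸ indep_ncard_le_alphaNum hICindep
  have hle : alphaNum (G.induce ({x, y}ᶜ : Set V)) ≤ (restrictSub G M _ hCcl).edgeSet.ncard :=
    alphaNum_le_pm_edges hMCpm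
  unfold IsKE
  omega
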